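/- arXiv:1408.1493 — 15 statements merged into one kernel-verified Lean document; each statement's English description precedes it below -/
import Mathlib

section
/- Let p, z ∈ ℂ with |z| = 1 and conj(p)·z ≠ 1, and set z' = (z − p)/(conj(p)·z − 1). Then the three points z, p, z' are collinear, i.e. Collinear ℝ ({z, p, z'} : Set ℂ), viewing ℂ as a real vector space. -/
/-- If `|z| = 1` and `conj p * z ≠ 1`, then `z`, `p` and the reversion image
`z' = (z - p)/(conj p * z - 1)` are collinear (viewing `ℂ` as a real vector space). -/
theorem reversion_image_collinear (p z : ℂ)
    (hz : ‖z‖ = 1) (hd : (starRingEnd ℂ) p * z ≠ 1) :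
    Collinear ℝ ({z, p, (z - p) / ((starRingEnd ℂ) p * z - 1)} : Set ℂ) := by
  have hzc : z * (starRingEnd ℂ) z = 1 := by
    rw [Complex.mul_conj]
    norm_cast
    rw [Complex.normSq_eq_norm_sq, hz]; norm_num
  have hz0 : z ≠ 0 := fun h => by simp [h] at hz
  have hden : (starRingEnd ℂ) p * z - 1 ≠ 0 := sub_ne_zero.mpr hd
  by_cases hp : p = z
  · subst hp
    simp only [sub_self, zero_div]
    have : ({p, p, (0:ℂ)} : Set ℂ) = {p, 0} := by
      ext x; simp [or_comm, or_assoc]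
    rw [this]
    exact collinear_pair ℝ p 0
  · have hpz : p - z ≠ 0 := sub_ne_zero.mpr hp
    set num : ℂ := 2 * z - p - (starRingEnd ℂ) p * z ^ 2 with hnum
    set den : ℂ := ((starRingEnd ℂ) p * z - 1) * (p - z) with hdendef
    have hden0 : den ≠ 0 := mul_ne_zero hden hpz
    have h1 : z ^ 2 * (starRingEnd ℂ) num = num := by
      simp only [hnum, map_sub, map_mul, map_ofNat, map_pow, RingHom.id_apply,
        Complex.conj_conj]
      linear_combination (2 * z - p * (z * (starRingEnd ℂ) z + 1)) * hzc
    have h2 : z ^ 2 * (starRingEnd ℂ) den = den := by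
      simp only [hdendef, map_mul, map_sub, map_one, Complex.conj_conj]
      linear_combination ((starRingEnd ℂ) p * p * z - p * (z * (starRingEnd ℂ) z + 1) + z) * hzc
    have key : (starRingEnd ℂ) num * den = num * (starRingEnd ℂ) den := by
      linear_combination (starRingEnd ℂ) den * h1 - (starRingEnd ℂ) num * h2
    set q : ℂ := num / den with hqdef
    have hqc : (starRingEnd ℂ) q = q := by
      rw [hqdef, map_div₀]
      rw [div_eq_div_iff ((map_ne_zero (starRingEnd ℂ)).mpr hden0) hden0]
      linear_combination key
    have hqre : (q.re : ℂ) = q := (Complex.conj_eq_iff_re.mp hqc)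
    have hq : (z - p) / ((starRingEnd ℂ) p * z - 1) = q.re • (p - z) + z := by
      rw [Complex.real_smul, hqre, hqdef, hnum, hdendef]
      have hd2 : ((starRingEnd ℂ) p * z - 1) * (p - z) ≠ 0 := mul_ne_zero hden hpz
      rw [div_mul_eq_mul_div, div_add' _ _ _ hd2, div_eq_div_iff hden hd2]
      ring
    apply (collinear_iff_of_mem (Set.mem_insert z _)).mpr
    refine ⟨p - z, ?_⟩
    intro x hx
    rcases hx with h | h | h
    · exact ⟨0, by simp [h]⟩
    · exact ⟨1, by simp [h]⟩
    · exact ⟨q.re, by rw [h, hq]; rfl⟩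
end

section
/- Let p, z ∈ ℂ with |z| = 1 and conj(p)·z ≠ 1, and set z' = (z − p)/(conj(p)·z − 1). Then (z' − p)·(2·Re(conj(p)·z) − |p|² − 1) = (1 − |p|²)·(z − p). In particular z' − p is a real scalar multiple of z − p. -/
/-- Computational core of the collinearity of `z`, `p`, `z'`:
for `|z| = 1`, `conj p * z ≠ 1`, and `z' = (z - p)/(conj p * z - 1)` one has
`(z' - p) * (2 Re(conj p * z) - |p|² - 1) = (1 - |p|²) * (z - p)`;
in particular `z' - p` is a real scalar multiple of `z - p`. -/
theorem reversion_image_real_multiple (p z : ℂ)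
    (hz : ‖z‖ = 1) (hd : (starRingEnd ℂ) p * z ≠ 1) :
    ((z - p) / ((starRingEnd ℂ) p * z - 1) - p) *
        ((2 * (((starRingEnd ℂ) p * z).re : ℝ) - ‖p‖ ^ 2 - 1 : ℝ) : ℂ)
      = ((1 - ‖p‖ ^ 2 : ℝ) : ℂ) * (z - p) ∧
    ∃ t : ℝ, (z - p) / ((starRingEnd ℂ) p * z - 1) - p = (t : ℂ) * (z - p) := by
  have hzz : z * (starRingEnd ℂ) z = 1 := by
    have h := Complex.mul_conj z
    rw [h, Complex.normSq_eq_norm_sq, hz]; norm_num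
  have hre : ((((starRingEnd ℂ) p * z).re : ℝ) : ℂ)
      = ((starRingEnd ℂ) p * z + p * (starRingEnd ℂ) z) / 2 := by
    have h := Complex.add_conj ((starRingEnd ℂ) p * z)
    rw [map_mul, Complex.conj_conj] at h
    push_cast at h
    linear_combination -h / 2
  have hp2 : ((‖p‖ ^ 2 : ℝ) : ℂ) = p * (starRingEnd ℂ) p := by
    rw [Complex.mul_conj, Complex.normSq_eq_norm_sq]
  have hne : (starRingEnd ℂ) p * z - 1 ≠ 0 := sub_ne_zero.mpr hd
  have hmain : ((z - p) / ((starRingEnd ℂ) p * z - 1) - p) *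
        ((2 * (((starRingEnd ℂ) p * z).re : ℝ) - ‖p‖ ^ 2 - 1 : ℝ) : ℂ)
      = ((1 - ‖p‖ ^ 2 : ℝ) : ℂ) * (z - p) := by
    rw [Complex.ofReal_sub, Complex.ofReal_sub, Complex.ofReal_sub, Complex.ofReal_mul, Complex.ofReal_one,
      Complex.ofReal_ofNat, hre, hp2]
    push_cast at hp2
    rw [mul_comm ((starRingEnd ℂ) p) z] at hne
    field_simp
    linear_combination (p - p^2 * (starRingEnd ℂ) p) * hzz
  refine ⟨hmain, ?_⟩
  have h0 : (2 * (((starRingEnd ℂ) p * z).re : ℝ) - ‖p‖ ^ 2 - 1 : ℝ) ≠ 0 := by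
    intro h
    set w := (starRingEnd ℂ) p * z with hw
    have habsw : ‖w‖ = ‖p‖ := by
      rw [hw, norm_mul, Complex.norm_conj, hz, mul_one]
    have hle : w.re ≤ ‖w‖ := Complex.re_le_norm w
    have hp1 : ‖p‖ = 1 := by nlinarith
    have hre1 : w.re = 1 := by nlinarith
    have him : w.im = 0 := by
      apply Complex.abs_re_eq_norm.mp
      rw [habsw, hp1, hre1]; norm_num
    exact hd (Complex.ext (by simpa using hre1) (by simpa using him))
  refine ⟨(1 - ‖p‖ ^ 2) /
      (2 * (((starRingEnd ℂ) p * z).re : ℝ) - ‖p‖ ^ 2 - 1), ?_⟩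
  have hD : ((2 * (((starRingEnd ℂ) p * z).re : ℝ) - ‖p‖ ^ 2 - 1 : ℝ) : ℂ) ≠ 0 :=
    Complex.ofReal_ne_zero.mpr h0
  rw [Complex.ofReal_div, div_mul_eq_mul_div, eq_div_iff hD]
  exact hmain
end

section
/- Let p, q, r ∈ ℂ. The product M(r) * M(q) * M(p) of reversion matrices has trace zero if and only if the points p, q, r are collinear, i.e. (M(r) * M(q) * M(p)).trace = 0 ↔ Collinear ℝ ({p, q, r} : Set ℂ). Equivalently, Im(conj(q)·p + conj(r)·q + conj(p)·r) = 0 iff p, q, r are collinear. -/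
open Matrix

/-- The reversion matrix `M(p) = !![1, -p; conj p, -1]`. -/
def M (p : ℂ) : Matrix (Fin 2) (Fin 2) ℂ := !![1, -p; (starRingEnd ℂ) p, -1]

lemma cross_zero_smul (u w : ℂ) (hu : u ≠ 0) (h : u.re * w.im - u.im * w.re = 0) :
    ∃ t : ℝ, w = t • u := by
  by_cases hre : u.re = 0
  · have him : u.im ≠ 0 := by
      intro h'; exact hu (Complex.ext hre h')
    refine ⟨w.im / u.im, ?_⟩
    have hwre : w.re = 0 := by
      have : u.im * w.re = 0 := by rw [hre] at h; linarith
      rcases mul_eq_zero.mp this with h' | h'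
      · exact absurd h' him
      · exact h'
    apply Complex.ext <;> simp [Complex.real_smul, hre, hwre, him]
  · refine ⟨w.re / u.re, ?_⟩
    apply Complex.ext
    · simp [Complex.real_smul]
      field_simp
    · simp [Complex.real_smul]
      field_simp
      nlinarith [h]

/-- The product `M(r) * M(q) * M(p)` of reversion matrices is traceless if and only
if the points `p`, `q`, `r` are collinear; equivalently,
`Im(conj q * p + conj r * q + conj p * r) = 0` iff `p`, `q`, `r` are collinear. -/
theorem trace_eq_zero_iff_collinear (p q r : ℂ) :
    ((M r * M q * M p).trace = 0 ↔ Collinear ℝ ({p, q, r} : Set ℂ)) ∧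
    (((starRingEnd ℂ) q * p + (starRingEnd ℂ) r * q + (starRingEnd ℂ) p * r).im = 0 ↔
      Collinear ℝ ({p, q, r} : Set ℂ)) := by
  set S := (starRingEnd ℂ) q * p + (starRingEnd ℂ) r * q + (starRingEnd ℂ) p * r with hS
  have htr : (M r * M q * M p).trace = S - (starRingEnd ℂ) S := by
    rw [M, M, M, Matrix.mul_fin_two, Matrix.mul_fin_two, Matrix.trace_fin_two_of, hS]
    simp only [map_add, _root_.map_mul, Complex.conj_conj]
    ring
  have iffA : (M r * M q * M p).trace = 0 ↔ S.im = 0 := by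
    rw [htr, Complex.sub_conj]
    simp [Complex.ext_iff]
  have iffB : S.im = 0 ↔ Collinear ℝ ({p, q, r} : Set ℂ) := by
    constructor
    · intro h
      by_cases hq : q = p
      · subst hq
        rw [Set.insert_comm, Set.insert_idem]
        exact collinear_pair ℝ q r
      · have hu : q - p ≠ 0 := sub_ne_zero.mpr hq
        have h' : (starRingEnd ℂ) q * p + (starRingEnd ℂ) r * q + (starRingEnd ℂ) p * r
            = S := hS.symm
        simp only [hS, Complex.add_im, Complex.mul_im, Complex.conj_re, Complex.conj_im] at h
        have hcross : (q - p).re * (r - p).im - (q - p).im * (r - p).re = 0 := by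
          simp only [Complex.sub_re, Complex.sub_im]
          nlinarith [h]
        obtain ⟨t, ht⟩ := cross_zero_smul (q - p) (r - p) hu hcross
        rw [collinear_iff_of_mem (Set.mem_insert p {q, r})]
        refine ⟨q - p, ?_⟩
        intro x hx
        rcases hx with hx | hx | hx
        · exact ⟨0, by simp [hx]⟩
        · exact ⟨1, by simp [hx]⟩
        · refine ⟨t, ?_⟩
          rw [Set.mem_singleton_iff.mp hx, ← ht]
          simp
    · intro hcol
      rw [collinear_iff_of_mem (Set.mem_insert p {q, r})] at hcol
      obtain ⟨v, hv⟩ := hcol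
      obtain ⟨b, hb⟩ := hv q (by simp)
      obtain ⟨c, hc⟩ := hv r (by simp)
      rw [hS, hb, hc]
      simp only [vadd_eq_add, Complex.real_smul, map_add, _root_.map_mul, Complex.conj_ofReal,
        Complex.add_im, Complex.mul_im, Complex.mul_re, Complex.add_re, Complex.conj_re,
        Complex.conj_im, Complex.ofReal_re, Complex.ofReal_im]
      ring
  exact ⟨iffA.trans iffB, iffB⟩
end

section
/- Let p, q, r ∈ ℂ be collinear (Collinear ℝ ({p, q, r} : Set ℂ)), and set d = 1 − conj(p)·q − conj(q)·r + conj(p)·r. Assume d ≠ 0. Then d is real (d.im = 0), and with s = (p − q + r − p·conj(q)·r)/d one has the matrix identity M(r) * M(q) * M(p) = d • M(s). Hence the composition of the three reversions through p, q, r equals, up to the nonzero real scalar d, the reversion through the point s. -/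
open Matrix

/-- For collinear `p, q, r` with `d = 1 - conj p * q - conj q * r + conj p * r ≠ 0`,
the scalar `d` is real and `M(r) * M(q) * M(p) = d • M(s)` where
`s = (p - q + r - p * conj q * r)/d`: the composition of the three reversions is,
up to the nonzero real scalar `d`, the reversion through `s`. -/
theorem comp_three_reversions_eq_reversion (p q r : ℂ)
    (hcol : Collinear ℝ ({p, q, r} : Set ℂ))
    (d : ℂ)
    (hd : d = 1 - (starRingEnd ℂ) p * q - (starRingEnd ℂ) q * r + (starRingEnd ℂ) p * r)
    (hd0 : d ≠ 0) :
    d.im = 0 ∧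
    M r * M q * M p = d • M ((p - q + r - p * (starRingEnd ℂ) q * r) / d) := by
  have hp : p ∈ ({p, q, r} : Set ℂ) := by simp
  obtain ⟨v, hv⟩ := (collinear_iff_of_mem hp).mp hcol
  obtain ⟨a, ha⟩ := hv q (by simp)
  obtain ⟨b, hb⟩ := hv r (by simp)
  have him : d.im = 0 := by
    subst hd ha hb
    simp [Complex.ext_iff, Complex.add_im, Complex.add_re, Complex.sub_im, Complex.sub_re,
      Complex.mul_im, Complex.mul_re, Complex.smul_im, Complex.smul_re]
    ring
  refine ⟨him, ?_⟩
  have hds : (starRingEnd ℂ) d = d := Complex.conj_eq_iff_im.mpr him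
  have key := hds
  rw [hd] at key
  simp only [map_add, map_sub, _root_.map_mul, _root_.map_one, Complex.conj_conj] at key
  set s0 : ℂ := p - q + r - p * (starRingEnd ℂ) q * r with hs0
  have hrhs : d • M (s0 / d) = !![d, -s0; (starRingEnd ℂ) s0, -d] := by
    ext i j
    fin_cases i <;> fin_cases j <;>
      simp [M, map_div₀, hds] <;>
      field_simp
  rw [hrhs]
  ext i j
  fin_cases i <;> fin_cases j <;>
    simp [M, Matrix.mul_apply, Fin.sum_univ_succ, hs0] <;>
    (try rw [hd]) <;>
    first
      | ring1
      | linear_combination key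
      | linear_combination -key
end

section
/- Let p, q, r ∈ ℂ be collinear (Collinear ℝ ({p, q, r} : Set ℂ)), set d = 1 − conj(p)·q − conj(q)·r + conj(p)·r, assume d ≠ 0, and let s = (p − q + r − p·conj(q)·r)/d. Then s lies on the same line: Collinear ℝ ({p, q, r, s} : Set ℂ). -/
/-- For collinear `p, q, r` with `d = 1 - conj p * q - conj q * r + conj p * r ≠ 0`,
the point `s = (p - q + r - p * conj q * r)/d` lies on the same line:
`p, q, r, s` are collinear. -/
theorem fourth_reversion_point_collinear (p q r : ℂ)
    (hcol : Collinear ℝ ({p, q, r} : Set ℂ))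
    (d : ℂ)
    (hd : d = 1 - (starRingEnd ℂ) p * q - (starRingEnd ℂ) q * r + (starRingEnd ℂ) p * r)
    (hd0 : d ≠ 0) :
    Collinear ℝ ({p, q, r, (p - q + r - p * (starRingEnd ℂ) q * r) / d} : Set ℂ) := by
  obtain ⟨u, hu⟩ := (collinear_iff_of_mem (show p ∈ ({p,q,r} : Set ℂ) by simp)).1 hcol
  obtain ⟨a, ha⟩ := hu q (by simp)
  obtain ⟨b, hb⟩ := hu r (by simp)
  have hq : q = (a:ℂ) * u + p := by rw [ha, vadd_eq_add, Complex.real_smul]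
  have hr : r = (b:ℂ) * u + p := by rw [hb, vadd_eq_add, Complex.real_smul]
  have hdc : (starRingEnd ℂ) d = d := by
    rw [hd, hq, hr]
    simp only [map_add, map_sub, map_mul, map_one, Complex.conj_conj, Complex.conj_ofReal]
    ring
  have hre : (d.re : ℂ) = d := Complex.conj_eq_iff_re.mp hdc
  have hD0 : (d.re : ℝ) ≠ 0 := by
    intro h; apply hd0; rw [← hre, h]; simp
  set c : ℝ := (b - a) * (1 - Complex.normSq p) / d.re with hc
  have hcr : c * d.re = (b - a) * (1 - Complex.normSq p) := div_mul_cancel₀ _ hD0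
  have hcd : (c:ℂ) * d = ((b:ℂ) - a) * (1 - (Complex.normSq p : ℂ)) := by
    rw [← hre, ← Complex.ofReal_mul, hcr]; push_cast; ring
  have hs : (p - q + r - p * (starRingEnd ℂ) q * r) / d = c • u + p := by
    rw [div_eq_iff hd0, Complex.real_smul]
    have h2 : ((c:ℂ) * u + p) * d = (c:ℂ) * d * u + p * d := by ring
    rw [h2, hcd, hd, hq, hr]
    simp only [map_add, map_mul, Complex.conj_ofReal]
    rw [← Complex.mul_conj]
    ring
  rw [hs]
  apply (collinear_iff_of_mem (show p ∈ ({p, q, r, c • u + p} : Set ℂ) by simp)).2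
  refine ⟨u, ?_⟩
  intro x hx
  simp only [Set.mem_insert_iff, Set.mem_singleton_iff] at hx
  rcases hx with h | h | h | h
  · exact ⟨0, by simp [h]⟩
  · exact ⟨a, by rw [h, ha]⟩
  · exact ⟨b, by rw [h, hb]⟩
  · exact ⟨c, h⟩
end

section
/- Let p, q, r ∈ ℂ be collinear, set d = 1 − conj(p)·q − conj(q)·r + conj(p)·r, assume d ≠ 0, and let s = (p − q + r − p·conj(q)·r)/d. Let x ∈ ℂ with |x| = 1, and define x₁ = (x − p)/(conj(p)·x − 1), x₂ = (x₁ − q)/(conj(q)·x₁ − 1), x₃ = (x₂ − r)/(conj(r)·x₂ − 1), assuming each of the three denominators conj(p)·x − 1, conj(q)·x₁ − 1, conj(r)·x₂ − 1 is nonzero and that conj(s)·x ≠ 1. Then x₃ = (x − s)/(conj(s)·x − 1). In particular the intersection point s of the line through x and x₃ with the line through p, q, r does not depend on x. -/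
/-- Paper's Theorem 2.2: for collinear `p, q, r` and
`s = (p - q + r - p * conj q * r)/d` with `d = 1 - conj p * q - conj q * r + conj p * r ≠ 0`,
the composition of the reversions through `p`, `q`, `r` applied to a point `x` of the
unit circle equals the reversion through `s` applied to `x`; in particular the
intersection point `s` of the line through `x` and `x₃` with the line through
`p, q, r` does not depend on `x`. -/
theorem comp_three_reversions_apply (p q r : ℂ)
    (hcol : Collinear ℝ ({p, q, r} : Set ℂ))
    (d : ℂ)
    (hd : d = 1 - (starRingEnd ℂ) p * q - (starRingEnd ℂ) q * r + (starRingEnd ℂ) p * r)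
    (hd0 : d ≠ 0)
    (s : ℂ) (hs : s = (p - q + r - p * (starRingEnd ℂ) q * r) / d)
    (x : ℂ) (hx : ‖x‖ = 1)
    (x₁ x₂ x₃ : ℂ)
    (hx₁ : x₁ = (x - p) / ((starRingEnd ℂ) p * x - 1))
    (hx₂ : x₂ = (x₁ - q) / ((starRingEnd ℂ) q * x₁ - 1))
    (hx₃ : x₃ = (x₂ - r) / ((starRingEnd ℂ) r * x₂ - 1))
    (hden₁ : (starRingEnd ℂ) p * x - 1 ≠ 0)
    (hden₂ : (starRingEnd ℂ) q * x₁ - 1 ≠ 0)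
    (hden₃ : (starRingEnd ℂ) r * x₂ - 1 ≠ 0)
    (hdens : (starRingEnd ℂ) s * x ≠ 1) :
    x₃ = (x - s) / ((starRingEnd ℂ) s * x - 1) := by
  have h2 : (q - p) * ((starRingEnd ℂ) r - (starRingEnd ℂ) p)
      = ((starRingEnd ℂ) q - (starRingEnd ℂ) p) * (r - p) := by
    obtain ⟨v, hv⟩ := (collinear_iff_of_mem (Set.mem_insert p {q, r})).mp hcol
    obtain ⟨tq, hq⟩ := hv q (by simp)
    obtain ⟨tr, hr⟩ := hv r (by simp)
    have hq' : q - p = (tq : ℂ) * v := by rw [hq, vadd_eq_add, Complex.real_smul]; ring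
    have hr' : r - p = (tr : ℂ) * v := by rw [hr, vadd_eq_add, Complex.real_smul]; ring
    rw [← map_sub, ← map_sub, hq', hr', map_mul, map_mul, Complex.conj_ofReal,
      Complex.conj_ofReal]
    ring
  have hD : (starRingEnd ℂ) d = 1 - p * (starRingEnd ℂ) q - q * (starRingEnd ℂ) r
      + p * (starRingEnd ℂ) r := by
    simp [hd, map_sub, map_add, map_mul, mul_comm]
  have hD0 : (starRingEnd ℂ) d ≠ 0 := by simpa using hd0
  have hsd : s * d = p - q + r - p * (starRingEnd ℂ) q * r := by
    rw [hs]; field_simp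
  have hSD : (starRingEnd ℂ) s * (starRingEnd ℂ) d
      = (starRingEnd ℂ) p - (starRingEnd ℂ) q + (starRingEnd ℂ) r
        - (starRingEnd ℂ) p * q * (starRingEnd ℂ) r := by
    rw [← map_mul, hsd]
    simp only [map_sub, map_add, map_mul, Complex.conj_conj]
  have hx₁e : x₁ * ((starRingEnd ℂ) p * x - 1) = x - p := by
    rw [hx₁]; exact div_mul_cancel₀ _ hden₁
  have he2 : ((starRingEnd ℂ) q * x₁ - 1) * ((starRingEnd ℂ) p * x - 1) = ((starRingEnd ℂ) q * (x - p) - ((starRingEnd ℂ) p * x - 1)) := by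
    linear_combination (starRingEnd ℂ) q * hx₁e
  have he2' : ((starRingEnd ℂ) q * (x - p) - ((starRingEnd ℂ) p * x - 1)) ≠ 0 := he2 ▸ mul_ne_zero hden₂ hden₁
  have hx₂e : x₂ * ((starRingEnd ℂ) q * (x - p) - ((starRingEnd ℂ) p * x - 1)) = (x - p - q * ((starRingEnd ℂ) p * x - 1)) := by
    have h : x₂ * ((starRingEnd ℂ) q * x₁ - 1) = x₁ - q := by rw [hx₂]; exact div_mul_cancel₀ _ hden₂
    linear_combination (-x₂) * he2 + ((starRingEnd ℂ) p * x - 1) * h + hx₁e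
  have he3 : ((starRingEnd ℂ) r * x₂ - 1) * ((starRingEnd ℂ) q * (x - p) - ((starRingEnd ℂ) p * x - 1)) = ((starRingEnd ℂ) r * (x - p - q * ((starRingEnd ℂ) p * x - 1)) - ((starRingEnd ℂ) q * (x - p) - ((starRingEnd ℂ) p * x - 1))) := by
    linear_combination (starRingEnd ℂ) r * hx₂e
  have he3' : ((starRingEnd ℂ) r * (x - p - q * ((starRingEnd ℂ) p * x - 1)) - ((starRingEnd ℂ) q * (x - p) - ((starRingEnd ℂ) p * x - 1))) ≠ 0 := he3 ▸ mul_ne_zero hden₃ he2'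
  have hx₃e : x₃ * ((starRingEnd ℂ) r * (x - p - q * ((starRingEnd ℂ) p * x - 1)) - ((starRingEnd ℂ) q * (x - p) - ((starRingEnd ℂ) p * x - 1))) = ((x - p - q * ((starRingEnd ℂ) p * x - 1)) - r * ((starRingEnd ℂ) q * (x - p) - ((starRingEnd ℂ) p * x - 1))) := by
    have h : x₃ * ((starRingEnd ℂ) r * x₂ - 1) = x₂ - r := by rw [hx₃]; exact div_mul_cancel₀ _ hden₃
    linear_combination (-x₃) * he3 + ((starRingEnd ℂ) q * (x - p) - ((starRingEnd ℂ) p * x - 1)) * h + hx₂e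
  have hdens' : (starRingEnd ℂ) s * x - 1 ≠ 0 := sub_ne_zero.mpr hdens
  have key : ((x - p - q * ((starRingEnd ℂ) p * x - 1)) - r * ((starRingEnd ℂ) q * (x - p) - ((starRingEnd ℂ) p * x - 1))) * (((starRingEnd ℂ) p - (starRingEnd ℂ) q + (starRingEnd ℂ) r - (starRingEnd ℂ) p * q * (starRingEnd ℂ) r) * x - (1 - p * (starRingEnd ℂ) q - q * (starRingEnd ℂ) r + p * (starRingEnd ℂ) r)) * (1 - (starRingEnd ℂ) p * q - (starRingEnd ℂ) q * r + (starRingEnd ℂ) p * r)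
      = (x * (1 - (starRingEnd ℂ) p * q - (starRingEnd ℂ) q * r + (starRingEnd ℂ) p * r) - (p - q + r - p * (starRingEnd ℂ) q * r)) * (1 - p * (starRingEnd ℂ) q - q * (starRingEnd ℂ) r + p * (starRingEnd ℂ) r) * ((starRingEnd ℂ) r * (x - p - q * ((starRingEnd ℂ) p * x - 1)) - ((starRingEnd ℂ) q * (x - p) - ((starRingEnd ℂ) p * x - 1))) := by
    linear_combination (-x + ((starRingEnd ℂ) r) * x * x - ((starRingEnd ℂ) q) * x * x + ((starRingEnd ℂ) p) * x * x + r - r * ((starRingEnd ℂ) r) * x + 2 * r * ((starRingEnd ℂ) q) * x - r * ((starRingEnd ℂ) q) * ((starRingEnd ℂ) r) * x * x + r * ((starRingEnd ℂ) q) * ((starRingEnd ℂ) q) * x * x - 2 * r * ((starRingEnd ℂ) p) * x + r * ((starRingEnd ℂ) p) * ((starRingEnd ℂ) r) * x * x - 2 * r * ((starRingEnd ℂ) p) * ((starRingEnd ℂ) q) * x * x + r * ((starRingEnd ℂ) p) * ((starRingEnd ℂ) p) * x * x - q + 2 * q * ((starRingEnd ℂ) r) * x - q * ((starRingEnd ℂ)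 q) * x + 2 * q * ((starRingEnd ℂ) p) * x - 2 * q * ((starRingEnd ℂ) p) * ((starRingEnd ℂ) r) * x * x + q * ((starRingEnd ℂ) p) * ((starRingEnd ℂ) q) * x * x - q * ((starRingEnd ℂ) p) * ((starRingEnd ℂ) p) * x * x - q * r * ((starRingEnd ℂ) r) - q * r * ((starRingEnd ℂ) q) * ((starRingEnd ℂ) r) * x + 2 * q * r * ((starRingEnd ℂ) p) * ((starRingEnd ℂ) r) * x + q * r * ((starRingEnd ℂ) p) * ((starRingEnd ℂ) q) * ((starRingEnd ℂ) r) * x * x - q * r * ((starRingEnd ℂ) p) * ((starRingEnd ℂ) p) * ((starRingEnd ℂ) r) * x * x + q * q * ((starRingEnd ℂ) r) - 2 * q * q * ((starRingEnd ℂ) p) * ((starRingEnd ℂ) r) * x + q * q * ((starRingEnd ℂ) p) * ((starRingEnd ℂ) p) * ((starRingEnd ℂ) r) * x * x + p - 2 * p * ((starRingEnd ℂ) r) * x + 2 * p * ((starRingEnd ℂ) q) * x - p * ((starRingEnd ℂ) p) * x + p * r * ((starRingEnd ℂ) r) - 2 * p * r * ((starRingEnd ℂ) q) + 2 * p * r *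 ((starRingEnd ℂ) q) * ((starRingEnd ℂ) r) * x - 2 * p * r * ((starRingEnd ℂ) q) * ((starRingEnd ℂ) q) * x - p * r * ((starRingEnd ℂ) p) * ((starRingEnd ℂ) r) * x + 2 * p * r * ((starRingEnd ℂ) p) * ((starRingEnd ℂ) q) * x - 2 * p * q * ((starRingEnd ℂ) r) + p * q * ((starRingEnd ℂ) q) + 2 * p * q * ((starRingEnd ℂ) p) * ((starRingEnd ℂ) r) * x - p * q * ((starRingEnd ℂ) p) * ((starRingEnd ℂ) q) * x + p * q * r * ((starRingEnd ℂ) q) * ((starRingEnd ℂ) r) - p * q * r * ((starRingEnd ℂ) p) * ((starRingEnd ℂ) q) * ((starRingEnd ℂ) r) * x + p * p * ((starRingEnd ℂ) r) - p * p * ((starRingEnd ℂ) q) - p * p * r * ((starRingEnd ℂ) q) * ((starRingEnd ℂ) r) + p * p * r * ((starRingEnd ℂ) q) * ((starRingEnd ℂ) q)) * h2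
  rw [eq_div_iff hdens']
  apply mul_right_cancel₀ (mul_ne_zero hd0 (mul_ne_zero hD0 he3'))
  linear_combination (((starRingEnd ℂ) s * x - 1) * d * (starRingEnd ℂ) d) * hx₃e
    + (((x - p - q * ((starRingEnd ℂ) p * x - 1)) - r * ((starRingEnd ℂ) q * (x - p) - ((starRingEnd ℂ) p * x - 1))) * d * x) * hSD
    + (-(((x - p - q * ((starRingEnd ℂ) p * x - 1)) - r * ((starRingEnd ℂ) q * (x - p) - ((starRingEnd ℂ) p * x - 1))) * d) - (x * (1 - (starRingEnd ℂ) p * q - (starRingEnd ℂ) q * r + (starRingEnd ℂ) p * r) - (p - q + r - p * (starRingEnd ℂ) q * r)) * ((starRingEnd ℂ) r * (x - p - q * ((starRingEnd ℂ) p * x - 1)) - ((starRingEnd ℂ) q * (x - p) - ((starRingEnd ℂ) p * x - 1)))) * hD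
    + (((x - p - q * ((starRingEnd ℂ) p * x - 1)) - r * ((starRingEnd ℂ) q * (x - p) - ((starRingEnd ℂ) p * x - 1))) * (((starRingEnd ℂ) p - (starRingEnd ℂ) q + (starRingEnd ℂ) r - (starRingEnd ℂ) p * q * (starRingEnd ℂ) r) * x - (1 - p * (starRingEnd ℂ) q - q * (starRingEnd ℂ) r + p * (starRingEnd ℂ) r)) - x * ((starRingEnd ℂ) r * (x - p - q * ((starRingEnd ℂ) p * x - 1)) - ((starRingEnd ℂ) q * (x - p) - ((starRingEnd ℂ) p * x - 1))) * (starRingEnd ℂ) d) * hd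
    + key + (starRingEnd ℂ) d * ((starRingEnd ℂ) r * (x - p - q * ((starRingEnd ℂ) p * x - 1)) - ((starRingEnd ℂ) q * (x - p) - ((starRingEnd ℂ) p * x - 1))) * hsd
end

section
/- Let p, q, r, s ∈ ℂ be collinear (Collinear ℝ ({p, q, r, s} : Set ℂ)) with |p| ≠ 1, |q| ≠ 1, |r| ≠ 1, |s| ≠ 1, and let N = M(s) * M(r) * M(q) * M(p). Suppose there exists x ∈ ℂ with |x| = 1 such that x is NOT collinear with p, q, r, s (¬ Collinear ℝ ({p, q, r, s, x} : Set ℂ)), the denominator N 1 0 · x + N 1 1 is nonzero, and N 0 0 · x + N 0 1 = x · (N 1 0 · x + N 1 1) (i.e. the Möbius transformation of N fixes x). Then N is a nonzero scalar multiple of the identity matrix: there exists λ ∈ ℂ, λ ≠ 0, with N = λ • 1. Consequently the Möbius transformation of N fixes every point of the unit circle. -/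
open Matrix

/-- The "line reflection" matrix associated to the line `{c + t • u}`. -/
def Tm (c u : ℂ) : Matrix (Fin 2) (Fin 2) ℂ :=
  !![(starRingEnd ℂ) u * c - u * (starRingEnd ℂ) c, 2*u;
     2*(starRingEnd ℂ) u, -((starRingEnd ℂ) u * c - u * (starRingEnd ℂ) c)]

lemma M_anticomm (c u : ℂ) (t : ℝ) :
    M (t • u + c) * Tm c u = -(Tm c u * M (t • u + c)) := by
  ext i j
  fin_cases i <;> fin_cases j <;>
    simp [M, Tm, Matrix.mul_apply, Fin.sum_univ_two, Complex.real_smul, _root_.map_add,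
      _root_.map_mul, Complex.conj_ofReal, Matrix.neg_apply] <;> ring

lemma pair_comm (c u : ℂ) (A B : Matrix (Fin 2) (Fin 2) ℂ)
    (hA : A * Tm c u = -(Tm c u * A)) (hB : B * Tm c u = -(Tm c u * B)) :
    (A * B) * Tm c u = Tm c u * (A * B) := by
  rw [mul_assoc, hB, Matrix.mul_neg, ← mul_assoc, hA, Matrix.neg_mul, neg_neg, mul_assoc]

/-- Porism on cyclic quadrilaterals (paper's Theorem 2.1): let `p, q, r, s` be
collinear points none of which lies on the unit circle, and let
`N = M(s) * M(r) * M(q) * M(p)`.  If the Möbius transformation of `N` fixes some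
point `x` of the unit circle that is not collinear with `p, q, r, s` (and the
denominator at `x` does not vanish), then `N` is a nonzero scalar multiple of the
identity matrix, and consequently the Möbius transformation of `N` fixes every
point of the unit circle. -/
theorem porism_cyclic_quadrilaterals (p q r s : ℂ)
    (hcol : Collinear ℝ ({p, q, r, s} : Set ℂ))
    (hp : ‖p‖ ≠ 1) (hq : ‖q‖ ≠ 1)
    (hr : ‖r‖ ≠ 1) (hs : ‖s‖ ≠ 1)
    (N : Matrix (Fin 2) (Fin 2) ℂ)
    (hN : N = M s * M r * M q * M p)
    (x : ℂ) (hx : ‖x‖ = 1)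
    (hxcol : ¬ Collinear ℝ ({p, q, r, s, x} : Set ℂ))
    (hden : N 1 0 * x + N 1 1 ≠ 0)
    (hfix : N 0 0 * x + N 0 1 = x * (N 1 0 * x + N 1 1)) :
    (∃ l : ℂ, l ≠ 0 ∧ N = l • (1 : Matrix (Fin 2) (Fin 2) ℂ)) ∧
    ∀ z : ℂ, ‖z‖ = 1 → N 0 0 * z + N 0 1 = z * (N 1 0 * z + N 1 1) := by
  have hpmem : p ∈ ({p, q, r, s} : Set ℂ) := by simp
  obtain ⟨v, hv⟩ := (collinear_iff_of_mem hpmem).1 hcol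
  obtain ⟨tq, hq'⟩ := hv q (by simp)
  obtain ⟨tr, hr'⟩ := hv r (by simp)
  obtain ⟨ts, hs'⟩ := hv s (by simp)
  have hv0 : v ≠ 0 := by
    rintro rfl
    simp only [smul_zero, zero_add, vadd_eq_add] at hq' hr' hs'
    apply hxcol
    refine Collinear.subset ?_ (collinear_pair ℝ p x)
    intro z hz
    rcases hz with rfl | rfl | rfl | rfl | rfl <;> simp [hq', hr', hs']
  have hcv0 : (starRingEnd ℂ) v ≠ 0 := by simpa using hv0
  have hap : M p * Tm p v = -(Tm p v * M p) := by
    have := M_anticomm p v 0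
    simpa using this
  have haq : M q * Tm p v = -(Tm p v * M q) := by
    have := M_anticomm p v tq
    rwa [show (tq : ℝ) • v + p = q from by rw [hq']; rfl] at this
  have har : M r * Tm p v = -(Tm p v * M r) := by
    have := M_anticomm p v tr
    rwa [show (tr : ℝ) • v + p = r from by rw [hr']; rfl] at this
  have has : M s * Tm p v = -(Tm p v * M s) := by
    have := M_anticomm p v ts
    rwa [show (ts : ℝ) • v + p = s from by rw [hs']; rfl] at this
  have hcomm : N * Tm p v = Tm p v * N := by
    have h1 := pair_comm p v (M s) (M r) has har
    have h2 := pair_comm p v (M q) (M p) haq hap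
    have hN' : N = (M s * M r) * (M q * M p) := by rw [hN, mul_assoc]
    rw [hN']
    calc ((M s * M r) * (M q * M p)) * Tm p v
        = (M s * M r) * ((M q * M p) * Tm p v) := mul_assoc _ _ _
      _ = (M s * M r) * (Tm p v * (M q * M p)) := by rw [h2]
      _ = ((M s * M r) * Tm p v) * (M q * M p) := (mul_assoc _ _ _).symm
      _ = (Tm p v * (M s * M r)) * (M q * M p) := by rw [h1]
      _ = Tm p v * ((M s * M r) * (M q * M p)) := mul_assoc _ _ _
  -- entry equations
  have h00 := congrFun (congrFun hcomm 0) 0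
  have h01 := congrFun (congrFun hcomm 0) 1
  simp [Matrix.mul_apply, Fin.sum_univ_two, Tm] at h00 h01
  have e00c : N 0 1 * (starRingEnd ℂ) v = v * N 1 0 := by linear_combination h00 / 2
  have e01c : v * (N 0 0 - N 1 1)
      = ((starRingEnd ℂ) v * p - v * (starRingEnd ℂ) p) * N 0 1 := by
    linear_combination h01 / 2
  -- key: N 0 1 = 0
  have hB : N 0 1 = 0 := by
    by_contra hB
    have hquad : (starRingEnd ℂ) v * x ^ 2
        - ((starRingEnd ℂ) v * p - v * (starRingEnd ℂ) p) * x - v = 0 := by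
      have key : N 0 1 * ((starRingEnd ℂ) v * x ^ 2
          - ((starRingEnd ℂ) v * p - v * (starRingEnd ℂ) p) * x - v) = 0 := by
        linear_combination x ^ 2 * e00c + x * e01c - v * hfix
      rcases mul_eq_zero.1 key with h | h
      · exact absurd h hB
      · exact h
    have hxx : x * (starRingEnd ℂ) x = 1 := by
      have := Complex.mul_conj x
      rw [Complex.normSq_eq_norm_sq, hx] at this
      simpa using this
    have hthis : (starRingEnd ℂ) v * x - v * (starRingEnd ℂ) x
        = (starRingEnd ℂ) v * p - v * (starRingEnd ℂ) p := by
      have h1 : ((starRingEnd ℂ) v * x ^ 2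
          - ((starRingEnd ℂ) v * p - v * (starRingEnd ℂ) p) * x - v) * (starRingEnd ℂ) x = 0 := by
        rw [hquad]; ring
      linear_combination h1 - ((starRingEnd ℂ) v * x
        - (starRingEnd ℂ) v * p + v * (starRingEnd ℂ) p) * hxx
    have hreal : (starRingEnd ℂ) ((starRingEnd ℂ) v * (x - p)) = (starRingEnd ℂ) v * (x - p) := by
      have expand : (starRingEnd ℂ) ((starRingEnd ℂ) v * (x - p))
          = v * ((starRingEnd ℂ) x - (starRingEnd ℂ) p) := by
        rw [_root_.map_mul, map_sub]
        simp
      rw [expand]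
      linear_combination -hthis
    obtain ⟨t, ht⟩ : ∃ t : ℝ, (starRingEnd ℂ) v * (x - p) = (t : ℂ) :=
      ⟨((starRingEnd ℂ) v * (x - p)).re, (Complex.conj_eq_iff_re.1 hreal).symm⟩
    apply hxcol
    refine (collinear_iff_of_mem (show p ∈ ({p, q, r, s, x} : Set ℂ) by simp)).2 ⟨v, ?_⟩
    intro z hz
    rcases hz with rfl | rfl | rfl | rfl | rfl
    · exact ⟨0, by simp⟩
    · exact ⟨tq, hq'⟩
    · exact ⟨tr, hr'⟩
    · exact ⟨ts, hs'⟩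
    · refine ⟨t / Complex.normSq v, ?_⟩
      have hns : (Complex.normSq v : ℂ) = v * (starRingEnd ℂ) v := (Complex.mul_conj v).symm
      have hns0 : (Complex.normSq v : ℂ) ≠ 0 := by
        rw [hns]; exact mul_ne_zero hv0 hcv0
      have hzp : z - p = (t / Complex.normSq v : ℝ) • v := by
        rw [Complex.real_smul]
        push_cast
        rw [div_mul_eq_mul_div, eq_div_iff hns0, hns]
        linear_combination v * ht
      simp only [vadd_eq_add]
      linear_combination hzp
  have hC : N 1 0 = 0 := by
    have h : v * N 1 0 = 0 := by linear_combination -e00c + (starRingEnd ℂ) v * hB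
    rcases mul_eq_zero.1 h with h | h
    · exact absurd h hv0
    · exact h
  have hAD : N 0 0 = N 1 1 := by
    have h : v * (N 0 0 - N 1 1) = 0 := by
      linear_combination e01c + ((starRingEnd ℂ) v * p - v * (starRingEnd ℂ) p) * hB
    rcases mul_eq_zero.1 h with h | h
    · exact absurd h hv0
    · linear_combination h
  have hl0 : N 1 1 ≠ 0 := by
    intro h
    apply hden
    rw [hC, h]
    ring
  refine ⟨⟨N 1 1, hl0, ?_⟩, ?_⟩
  · ext i j
    fin_cases i <;> fin_cases j <;>
      simp [hB, hC, hAD, Matrix.smul_apply, Matrix.one_apply]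
  · intro z hz
    rw [hB, hC, hAD]
    ring
end

section
/- Let l : List ℂ be a list of odd length whose members all lie on one line, i.e. Collinear ℝ ({z : ℂ | z ∈ l} : Set ℂ). Then the product of the corresponding reversion matrices is traceless: ((l.map M).prod).trace = 0. -/
open Matrix

namespace OddRev

/-- "Odd part" membership: complex span of `P` and `Q`. -/
def S1 (P Q X : Matrix (Fin 2) (Fin 2) ℂ) : Prop := ∃ u v : ℂ, X = u • P + v • Q

/-- "Even part" membership: complex span of `1` and `P * Q`. -/
def S0 (P Q X : Matrix (Fin 2) (Fin 2) ℂ) : Prop := ∃ u v : ℂ, X = u • 1 + v • (P * Q)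

variable {P Q : Matrix (Fin 2) (Fin 2) ℂ} {cP cQ g : ℂ}

lemma mul11 (hP : P * P = cP • 1) (hQ : Q * Q = cQ • 1)
    (hg : Q * P = g • 1 - P * Q) {X Y : Matrix (Fin 2) (Fin 2) ℂ}
    (hX : S1 P Q X) (hY : S1 P Q Y) : S0 P Q (X * Y) := by
  obtain ⟨u1, v1, rfl⟩ := hX
  obtain ⟨u2, v2, rfl⟩ := hY
  refine ⟨u1*u2*cP + v1*v2*cQ + v1*u2*g, u1*v2 - v1*u2, ?_⟩
  simp only [add_mul, mul_add, smul_mul_assoc, mul_smul_comm, hP, hQ, hg]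
  module

lemma mul10 (hP : P * P = cP • 1) (hQ : Q * Q = cQ • 1)
    (hg : Q * P = g • 1 - P * Q) {X Y : Matrix (Fin 2) (Fin 2) ℂ}
    (hX : S1 P Q X) (hY : S0 P Q Y) : S1 P Q (X * Y) := by
  obtain ⟨u1, v1, rfl⟩ := hX
  obtain ⟨u2, v2, rfl⟩ := hY
  have h1 : P * (P * Q) = cP • Q := by rw [← mul_assoc, hP, smul_mul_assoc, one_mul]
  have h2 : Q * (P * Q) = g • Q - cQ • P := by
    rw [← mul_assoc, hg, sub_mul, smul_mul_assoc, one_mul, mul_assoc, hQ, mul_smul_comm,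
      mul_one]
  refine ⟨u1*u2 - v1*v2*cQ, u1*v2*cP + v1*u2 + v1*v2*g, ?_⟩
  simp only [add_mul, mul_add, smul_mul_assoc, mul_smul_comm, mul_one, h1, h2]
  module

lemma prod_S (hP : P * P = cP • 1) (hQ : Q * Q = cQ • 1)
    (hg : Q * P = g • 1 - P * Q) :
    ∀ L : List (Matrix (Fin 2) (Fin 2) ℂ), (∀ X ∈ L, S1 P Q X) →
      (Even L.length → S0 P Q L.prod) ∧ (Odd L.length → S1 P Q L.prod) := by
  intro L
  induction L with
  | nil =>
    intro _
    refine ⟨fun _ => ⟨1, 0, by simp⟩, fun h => ?_⟩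
    simp [Nat.odd_iff] at h
  | cons X L ih =>
    intro h
    have hX : S1 P Q X := h X List.mem_cons_self
    have ihL := ih (fun Y hY => h Y (List.mem_cons_of_mem _ hY))
    constructor
    · intro he
      have : Odd L.length := by
        rw [List.length_cons, Nat.even_add_one] at he
        exact Nat.not_even_iff_odd.mp he
      rw [List.prod_cons]
      exact mul11 hP hQ hg hX (ihL.2 this)
    · intro ho
      have : Even L.length := by
        rw [List.length_cons, Nat.odd_add_one] at ho
        exact Nat.not_odd_iff_even.mp ho
      rw [List.prod_cons]
      exact mul10 hP hQ hg hX (ihL.1 this)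

end OddRev

/-- The product of an odd number of reversion matrices through collinear points is
traceless, i.e. is (up to scalar) again a reversion matrix. -/
theorem odd_product_of_reversions_traceless (l : List ℂ)
    (hodd : Odd l.length)
    (hcol : Collinear ℝ ({z : ℂ | z ∈ l} : Set ℂ)) :
    ((l.map M).prod).trace = 0 := by
  rw [collinear_iff_exists_forall_eq_smul_vadd] at hcol
  obtain ⟨p₀, v, hv⟩ := hcol
  set P : Matrix (Fin 2) (Fin 2) ℂ := M p₀ with hPdef
  set Q : Matrix (Fin 2) (Fin 2) ℂ := !![0, -v; (starRingEnd ℂ) v, 0] with hQdef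
  have hP : P * P = (1 - p₀ * (starRingEnd ℂ) p₀) • 1 := by
    ext i j
    fin_cases i <;> fin_cases j <;>
      simp [hPdef, hQdef, M, Matrix.mul_apply, Fin.sum_univ_two, Matrix.one_apply] <;> ring
  have hQ : Q * Q = (-(v * (starRingEnd ℂ) v)) • 1 := by
    ext i j
    fin_cases i <;> fin_cases j <;>
      simp [hPdef, hQdef, M, Matrix.mul_apply, Fin.sum_univ_two, Matrix.one_apply] <;> ring
  have hg : Q * P = (-(p₀ * (starRingEnd ℂ) v + (starRingEnd ℂ) p₀ * v)) • 1 - P * Q := by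
    ext i j
    fin_cases i <;> fin_cases j <;>
      simp [hPdef, hQdef, M, Matrix.mul_apply, Fin.sum_univ_two, Matrix.one_apply] <;> ring
  have hmem : ∀ X ∈ l.map M, OddRev.S1 P Q X := by
    intro X hX
    rw [List.mem_map] at hX
    obtain ⟨p, hp, rfl⟩ := hX
    obtain ⟨r, hr⟩ := hv p hp
    refine ⟨1, (r : ℂ), ?_⟩
    subst hr
    ext i j
    fin_cases i <;> fin_cases j <;>
      simp [hPdef, hQdef, M, Complex.real_smul, map_add, _root_.map_mul, Complex.conj_ofReal] <;> ring
  have hlen : Odd (l.map M).length := by simpa using hodd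
  obtain ⟨u, w, hw⟩ := (OddRev.prod_S hP hQ hg (l.map M) hmem).2 hlen
  rw [hw]
  have htP : P.trace = 0 := by simp [hPdef, M, Matrix.trace_fin_two]
  have htQ : Q.trace = 0 := by simp [hQdef, Matrix.trace_fin_two]
  simp [Matrix.trace_add, Matrix.trace_smul, htP, htQ]
end

section
/- Let l : List ℂ be a list of even length whose members all lie on one line (Collinear ℝ ({z : ℂ | z ∈ l} : Set ℂ)) and satisfy |z| ≠ 1 for every z ∈ l. Let N = (l.map M).prod. Suppose there exists x ∈ ℂ with |x| = 1 such that ¬ Collinear ℝ (({z : ℂ | z ∈ l} ∪ {x}) : Set ℂ), the denominator N 1 0 · x + N 1 1 is nonzero, and N 0 0 · x + N 0 1 = x · (N 1 0 · x + N 1 1). Then there exists λ ∈ ℂ, λ ≠ 0, with N = λ • 1; hence the Möbius transformation of N fixes every point of the unit circle. -/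
open Matrix

lemma M_mulVec (p z : ℂ) : (M p).mulVec ![z, 1] = ![z - p, (starRingEnd ℂ) p * z - 1] := by
  funext i
  fin_cases i <;> simp [M, Matrix.mulVec, dotProduct, Fin.sum_univ_two] <;> ring

lemma aux_swap (z₁ z₂ : ℂ) : ∀ (l : List ℂ),
    (∀ p ∈ l, z₁ - p = ((starRingEnd ℂ) p * z₁ - 1) * z₂ ∧
      z₂ - p = ((starRingEnd ℂ) p * z₂ - 1) * z₁) →
    ∃ K₁ K₂ : ℂ,
      K₁ * K₂ = (l.map (fun p => ((starRingEnd ℂ) p * z₁ - 1) * ((starRingEnd ℂ) p * z₂ - 1))).prod ∧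
      ((Even l.length ∧ (l.map M).prod.mulVec ![z₁,1] = K₁ • ![z₁,1] ∧
          (l.map M).prod.mulVec ![z₂,1] = K₂ • ![z₂,1])
       ∨ (¬ Even l.length ∧ (l.map M).prod.mulVec ![z₁,1] = K₁ • ![z₂,1] ∧
          (l.map M).prod.mulVec ![z₂,1] = K₂ • ![z₁,1])) := by
  intro l
  induction l with
  | nil =>
    intro _
    refine ⟨1, 1, by simp, Or.inl ⟨by simp, by simp, by simp⟩⟩
  | cons p t ih =>
    intro h
    obtain ⟨K₁, K₂, hK, hcase⟩ := ih (fun q hq => h q (List.mem_cons_of_mem _ hq))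
    have hp := h p List.mem_cons_self
    have hMv1 : (M p).mulVec ![z₁, 1] = ((starRingEnd ℂ) p * z₁ - 1) • ![z₂, 1] := by
      rw [M_mulVec]
      funext i
      fin_cases i
      · simpa using hp.1
      · simp
    have hMv2 : (M p).mulVec ![z₂, 1] = ((starRingEnd ℂ) p * z₂ - 1) • ![z₁, 1] := by
      rw [M_mulVec]
      funext i
      fin_cases i
      · simpa using hp.2
      · simp
    have hprodmat : ((p :: t).map M).prod = M p * (t.map M).prod := by simp
    rcases hcase with ⟨hev, h1, h2⟩ | ⟨hodd, h1, h2⟩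
    · refine ⟨((starRingEnd ℂ) p * z₁ - 1) * K₁, ((starRingEnd ℂ) p * z₂ - 1) * K₂, ?_,
        Or.inr ⟨?_, ?_, ?_⟩⟩
      · simp only [List.map_cons, List.prod_cons]
        rw [← hK]; ring
      · simpa [Nat.even_add_one] using hev
      · rw [hprodmat, ← Matrix.mulVec_mulVec, h1, Matrix.mulVec_smul, hMv1, smul_smul, mul_comm]
      · rw [hprodmat, ← Matrix.mulVec_mulVec, h2, Matrix.mulVec_smul, hMv2, smul_smul, mul_comm]
    · refine ⟨((starRingEnd ℂ) p * z₂ - 1) * K₁, ((starRingEnd ℂ) p * z₁ - 1) * K₂, ?_,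
        Or.inl ⟨?_, ?_, ?_⟩⟩
      · simp only [List.map_cons, List.prod_cons]
        rw [← hK]; ring
      · simpa [Nat.even_add_one] using hodd
      · rw [hprodmat, ← Matrix.mulVec_mulVec, h1, Matrix.mulVec_smul, hMv2, smul_smul, mul_comm]
      · rw [hprodmat, ← Matrix.mulVec_mulVec, h2, Matrix.mulVec_smul, hMv1, smul_smul, mul_comm]

lemma prod_neg_aux (l : List ℂ) (f : ℂ → ℂ) :
    (l.map (fun p => -f p)).prod = (-1 : ℂ) ^ l.length * (l.map f).prod := by
  induction l with
  | nil => simp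
  | cons p t ih => simp [ih]; ring

/-- Porism for cyclic `2n`-gons (paper's Theorem 4.1): let `l` be a list of an even
number of collinear points, none on the unit circle, and `N` the product of the
corresponding reversion matrices.  If the Möbius transformation of `N` fixes some
point `x` of the unit circle not collinear with the points of `l` (with nonvanishing
denominator at `x`), then `N` is a nonzero scalar multiple of the identity and hence
its Möbius transformation fixes every point of the unit circle. -/
theorem porism_cyclic_polygons (l : List ℂ)
    (heven : Even l.length)
    (hcol : Collinear ℝ ({z : ℂ | z ∈ l} : Set ℂ))
    (hnc : ∀ z ∈ l, ‖z‖ ≠ 1)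
    (N : Matrix (Fin 2) (Fin 2) ℂ)
    (hN : N = (l.map M).prod)
    (x : ℂ) (hx : ‖x‖ = 1)
    (hxcol : ¬ Collinear ℝ (({z : ℂ | z ∈ l} ∪ {x}) : Set ℂ))
    (hden : N 1 0 * x + N 1 1 ≠ 0)
    (hfix : N 0 0 * x + N 0 1 = x * (N 1 0 * x + N 1 1)) :
    (∃ l' : ℂ, l' ≠ 0 ∧ N = l' • (1 : Matrix (Fin 2) (Fin 2) ℂ)) ∧
    ∀ z : ℂ, ‖z‖ = 1 → N 0 0 * z + N 0 1 = z * (N 1 0 * z + N 1 1) := by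
  -- Step 1: find a line containing all points of `l` but not `x`.
  obtain ⟨u, vv, hu, hmem, hxnot⟩ : ∃ u vv : ℂ, u ≠ 0 ∧
      (∀ p ∈ l, ∃ t : ℝ, p = (t : ℝ) • u + vv) ∧ ¬ ∃ t : ℝ, x = (t : ℝ) • u + vv := by
    rw [collinear_iff_exists_forall_eq_smul_vadd] at hcol
    obtain ⟨p₀, v, hline0⟩ := hcol
    rcases eq_or_ne v 0 with hv | hv
    · have hall : ∀ p ∈ l, p = p₀ := by
        intro p hp
        obtain ⟨r, hr⟩ := hline0 p hp
        simpa [hv] using hr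
      have hxp : x ≠ p₀ := by
        intro h
        apply hxcol
        rw [collinear_iff_exists_forall_eq_smul_vadd]
        refine ⟨p₀, 0, ?_⟩
        rintro p hp
        simp only [Set.mem_union, Set.mem_setOf_eq, Set.mem_singleton_iff] at hp
        rcases hp with hp | hp
        · exact ⟨0, by simp [hall p hp]⟩
        · exact ⟨0, by simp [hp, h]⟩
      refine ⟨Complex.I * (x - p₀), p₀, ?_, ?_, ?_⟩
      · exact mul_ne_zero Complex.I_ne_zero (sub_ne_zero.mpr hxp)
      · intro p hp
        exact ⟨0, by simp [hall p hp]⟩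
      · rintro ⟨t, ht⟩
        have h1 : x - p₀ = (t : ℂ) * (Complex.I * (x - p₀)) := by
          rw [Complex.real_smul] at ht
          linear_combination ht
        have h2 : (1 - (t : ℂ) * Complex.I) * (x - p₀) = 0 := by linear_combination h1
        rcases mul_eq_zero.mp h2 with h3 | h3
        · have h4 : (1 : ℂ) = (t : ℂ) * Complex.I := by linear_combination h3
          have := congrArg Complex.re h4
          simp at this
        · exact hxp (sub_eq_zero.mp h3)
    · refine ⟨v, p₀, hv, ?_, ?_⟩
      · intro p hp
        obtain ⟨r, hr⟩ := hline0 p hp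
        exact ⟨r, by simpa using hr⟩
      · rintro ⟨t, ht⟩
        apply hxcol
        rw [collinear_iff_exists_forall_eq_smul_vadd]
        refine ⟨p₀, v, ?_⟩
        rintro p hp
        simp only [Set.mem_union, Set.mem_setOf_eq, Set.mem_singleton_iff] at hp
        rcases hp with hp | hp
        · exact hline0 p hp
        · exact ⟨t, by simpa [hp] using ht⟩
  -- Step 2: the line equation.
  obtain ⟨cu, hcu⟩ : ∃ c : ℂ, c = (starRingEnd ℂ) u := ⟨_, rfl⟩
  have hu' : cu ≠ 0 := by simp [hcu, hu]
  obtain ⟨s, hs⟩ : ∃ s : ℂ, s = cu * vv - u * (starRingEnd ℂ) vv := ⟨_, rfl⟩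
  have hlineq : ∀ p ∈ l, cu * p - u * (starRingEnd ℂ) p = s := by
    intro p hp
    obtain ⟨t, ht⟩ := hmem p hp
    rw [ht, Complex.real_smul, hs, hcu]
    simp only [map_add, _root_.map_mul, Complex.conj_ofReal]
    ring
  have hxline : cu * x - u * (starRingEnd ℂ) x ≠ s := by
    intro heq
    apply hxnot
    set w : ℂ := (x - vv) / u with hw
    have hwconj : (starRingEnd ℂ) w = w := by
      rw [hw, map_div₀, ← hcu, div_eq_div_iff hu' hu]
      simp only [map_sub]
      linear_combination -heq - hs
    have hwre : (w.re : ℂ) = w := Complex.conj_eq_iff_re.mp hwconj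
    refine ⟨w.re, ?_⟩
    rw [Complex.real_smul, hwre]
    have hwu : w * u = x - vv := div_mul_cancel₀ _ hu
    linear_combination -hwu
  -- Step 3: the two (possibly equal) intersection points of the line with the circle.
  obtain ⟨r, hr⟩ := IsAlgClosed.exists_pow_nat_eq (k := ℂ) (s ^ 2 + 4 * u * cu) (n := 2)
    (by norm_num)
  obtain ⟨z₁, z₂, hsum, hprod⟩ : ∃ z₁ z₂ : ℂ, cu * (z₁ + z₂) = s ∧ cu * (z₁ * z₂) = -u := by
    refine ⟨(s + r) / (2 * cu), (s - r) / (2 * cu), by field_simp; ring, ?_⟩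
    field_simp
    linear_combination -hr
  have hQ : ∀ z : ℂ, cu * z ^ 2 - s * z - u = cu * (z - z₁) * (z - z₂) := by
    intro z
    linear_combination z * hsum - hprod
  have hxx : x * (starRingEnd ℂ) x = 1 := by
    rw [Complex.mul_conj, Complex.normSq_eq_norm_sq, hx]
    norm_num
  have hxroot : cu * x ^ 2 - s * x - u ≠ 0 := by
    intro h0
    exact hxline (by linear_combination (starRingEnd ℂ) x * h0 + (s - cu * x) * hxx)
  have hx1 : x ≠ z₁ := by
    intro h
    exact hxroot (by rw [h, hQ z₁]; ring)
  have hx2 : x ≠ z₂ := by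
    intro h
    exact hxroot (by rw [h, hQ z₂]; ring)
  -- Step 4: each reversion matrix swaps the two intersection points.
  have hswap : ∀ p ∈ l, z₁ - p = ((starRingEnd ℂ) p * z₁ - 1) * z₂ ∧
      z₂ - p = ((starRingEnd ℂ) p * z₂ - 1) * z₁ := by
    intro p hp
    have hl := hlineq p hp
    constructor
    · have hmul : cu * (z₁ - p) = cu * (((starRingEnd ℂ) p * z₁ - 1) * z₂) := by
        linear_combination hsum - hl - (starRingEnd ℂ) p * hprod
      exact mul_left_cancel₀ hu' hmul
    · have hmul : cu * (z₂ - p) = cu * (((starRingEnd ℂ) p * z₂ - 1) * z₁) := by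
        linear_combination hsum - hl - (starRingEnd ℂ) p * hprod
      exact mul_left_cancel₀ hu' hmul
  have hkappa : ∀ p ∈ l,
      ((starRingEnd ℂ) p * z₁ - 1) * ((starRingEnd ℂ) p * z₂ - 1) = 1 - p * (starRingEnd ℂ) p := by
    intro p hp
    have hl := hlineq p hp
    have hmul : cu * (((starRingEnd ℂ) p * z₁ - 1) * ((starRingEnd ℂ) p * z₂ - 1))
        = cu * (1 - p * (starRingEnd ℂ) p) := by
      linear_combination (starRingEnd ℂ) p ^ 2 * hprod - (starRingEnd ℂ) p * hsum
        + (starRingEnd ℂ) p * hl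
    exact mul_left_cancel₀ hu' hmul
  -- Step 5: apply the induction lemma.
  obtain ⟨K₁, K₂, hK, hcase⟩ := aux_swap z₁ z₂ l hswap
  rcases hcase with ⟨-, hv1, hv2⟩ | ⟨hodd, -, -⟩
  swap
  · exact absurd heven hodd
  rw [← hN] at hv1 hv2
  have hKprod : K₁ * K₂ = (l.map (fun p => 1 - p * (starRingEnd ℂ) p)).prod := by
    rw [hK]
    congr 1
    exact List.map_congr_left hkappa
  -- the product is nonzero
  have hprodne : (l.map (fun p => 1 - p * (starRingEnd ℂ) p)).prod ≠ 0 := by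
    apply List.prod_ne_zero
    intro hmem0
    rw [List.mem_map] at hmem0
    obtain ⟨p, hp, h0⟩ := hmem0
    have h1 : p * (starRingEnd ℂ) p = 1 := by linear_combination -h0
    rw [Complex.mul_conj, Complex.normSq_eq_norm_sq] at h1
    have h2 : ‖p‖ ^ 2 = 1 := by exact_mod_cast h1
    have h3 : (‖p‖ - 1) * (‖p‖ + 1) = 0 := by linear_combination h2
    rcases mul_eq_zero.mp h3 with h4 | h4
    · exact hnc p hp (by linarith)
    · linarith [norm_nonneg p]
  -- determinant of N
  have hdet : N.det = (l.map (fun p => 1 - p * (starRingEnd ℂ) p)).prod := by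
    rw [hN]
    have h1 : ((l.map M).prod).det = ((l.map M).map Matrix.det).prod :=
      map_list_prod (Matrix.detMonoidHom) (l.map M)
    rw [h1, List.map_map]
    have h2 : (Matrix.det ∘ M) = fun p => -(1 - p * (starRingEnd ℂ) p) := by
      funext p
      simp [M, Matrix.det_fin_two_of]
      ring
    rw [h2, prod_neg_aux, heven.neg_one_pow, one_mul]
  have hdetKK : N.det = K₁ * K₂ := by rw [hdet, hKprod]
  have hdet2 : N 0 0 * N 1 1 - N 0 1 * N 1 0 = K₁ * K₂ := by
    rw [← hdetKK, Matrix.det_fin_two]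
  have hKKne : K₁ * K₂ ≠ 0 := by rw [hKprod]; exact hprodne
  -- component equations
  have e1 : N 0 0 * z₁ + N 0 1 = K₁ * z₁ := by
    have := congrFun hv1 0
    simpa [Matrix.mulVec, dotProduct, Fin.sum_univ_two] using this
  have e2 : N 1 0 * z₁ + N 1 1 = K₁ := by
    have := congrFun hv1 1
    simpa [Matrix.mulVec, dotProduct, Fin.sum_univ_two] using this
  have e3 : N 0 0 * z₂ + N 0 1 = K₂ * z₂ := by
    have := congrFun hv2 0
    simpa [Matrix.mulVec, dotProduct, Fin.sum_univ_two] using this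
  have e4 : N 1 0 * z₂ + N 1 1 = K₂ := by
    have := congrFun hv2 1
    simpa [Matrix.mulVec, dotProduct, Fin.sum_univ_two] using this
  -- main case analysis: find μ ≠ 0 with N = μ • 1
  have main : ∃ μ : ℂ, μ ≠ 0 ∧ N 0 0 = μ ∧ N 0 1 = 0 ∧ N 1 0 = 0 ∧ N 1 1 = μ := by
    rcases eq_or_ne z₁ z₂ with h12 | h12
    · -- tangent case
      have hKK : K₁ = K₂ := by rw [← e2, ← e4, h12]
      have hKne : K₁ ≠ 0 := fun h => hKKne (by rw [h, zero_mul])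
      have he : z₁ - x ≠ 0 := sub_ne_zero.mpr (Ne.symm hx1)
      have hae : N 0 0 * (z₁ - x) = K₁ * z₁ - (N 1 0 * x + N 1 1) * x := by
        linear_combination e1 - hfix
      have hce : N 1 0 * (z₁ - x) = K₁ - (N 1 0 * x + N 1 1) := by
        linear_combination e2
      have hbe : N 0 1 * (z₁ - x) = ((N 1 0 * x + N 1 1) - K₁) * (z₁ * x) := by
        linear_combination z₁ * hfix - x * e1
      have hde : N 1 1 * (z₁ - x) = (N 1 0 * x + N 1 1) * z₁ - K₁ * x := by
        linear_combination -x * e2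
      have hA : N 0 0 * (z₁ - x) * (N 1 1 * (z₁ - x))
          = (K₁ * z₁ - (N 1 0 * x + N 1 1) * x) * ((N 1 0 * x + N 1 1) * z₁ - K₁ * x) := by
        rw [hae, hde]
      have hB : N 0 1 * (z₁ - x) * (N 1 0 * (z₁ - x))
          = (((N 1 0 * x + N 1 1) - K₁) * (z₁ * x)) * (K₁ - (N 1 0 * x + N 1 1)) := by
        rw [hbe, hce]
      have key : (N 0 0 * N 1 1 - N 0 1 * N 1 0) * (z₁ - x) ^ 2
          = K₁ * (N 1 0 * x + N 1 1) * (z₁ - x) ^ 2 := by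
        linear_combination hA - hB
      have key2 : K₁ * ((N 1 0 * x + N 1 1) - K₁) * (z₁ - x) ^ 2 = 0 := by
        rw [← hKK] at hdet2
        linear_combination hdet2 * (z₁ - x) ^ 2 - key
      have hμK : N 1 0 * x + N 1 1 = K₁ := by
        rcases mul_eq_zero.mp key2 with h | h
        · rcases mul_eq_zero.mp h with h' | h'
          · exact absurd h' hKne
          · linear_combination h'
        · exact absurd (pow_eq_zero_iff (by norm_num)|>.mp h) he
      have hc0 : N 1 0 = 0 := by
        have : N 1 0 * (z₁ - x) = 0 := by rw [hce, hμK]; ring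
        exact (mul_eq_zero.mp this).resolve_right he
      have hb0 : N 0 1 = 0 := by
        have : N 0 1 * (z₁ - x) = 0 := by rw [hbe, hμK]; ring
        exact (mul_eq_zero.mp this).resolve_right he
      have ha : N 0 0 = K₁ := by
        have h' : N 0 0 * (z₁ - x) = K₁ * (z₁ - x) := by rw [hae, hμK]; ring
        have := mul_right_cancel₀ he h'
        exact this
      have hd : N 1 1 = K₁ := by
        have h' : N 1 1 * (z₁ - x) = K₁ * (z₁ - x) := by rw [hde, hμK]; ring
        exact mul_right_cancel₀ he h'
      exact ⟨K₁, hKne, ha, hb0, hc0, hd⟩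
    · -- distinct roots: the fixed-point quadratic has three distinct roots
      have t1 : N 1 0 * z₁ ^ 2 + (N 1 1 - N 0 0) * z₁ - N 0 1 = 0 := by
        linear_combination z₁ * e2 - e1
      have t2 : N 1 0 * z₂ ^ 2 + (N 1 1 - N 0 0) * z₂ - N 0 1 = 0 := by
        linear_combination z₂ * e4 - e3
      have t3 : N 1 0 * x ^ 2 + (N 1 1 - N 0 0) * x - N 0 1 = 0 := by
        linear_combination -hfix
      have u1 : (N 1 0 * (z₁ + z₂) + (N 1 1 - N 0 0)) * (z₁ - z₂) = 0 := by
        linear_combination t1 - t2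
      have u2 : (N 1 0 * (z₁ + x) + (N 1 1 - N 0 0)) * (z₁ - x) = 0 := by
        linear_combination t1 - t3
      have hz12 : z₁ - z₂ ≠ 0 := sub_ne_zero.mpr h12
      have hz1x : z₁ - x ≠ 0 := sub_ne_zero.mpr (Ne.symm hx1)
      have v1 : N 1 0 * (z₁ + z₂) + (N 1 1 - N 0 0) = 0 :=
        (mul_eq_zero.mp u1).resolve_right hz12
      have v2 : N 1 0 * (z₁ + x) + (N 1 1 - N 0 0) = 0 :=
        (mul_eq_zero.mp u2).resolve_right hz1x
      have w1 : N 1 0 * (z₂ - x) = 0 := by linear_combination v1 - v2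
      have hc0 : N 1 0 = 0 := by
        rcases mul_eq_zero.mp w1 with h | h
        · exact h
        · exact absurd h (sub_ne_zero.mpr (Ne.symm hx2))
      have hda : N 1 1 = N 0 0 := by linear_combination v1 - (z₁ + z₂) * hc0
      have hb0 : N 0 1 = 0 := by linear_combination -t1 + z₁ ^ 2 * hc0 + z₁ * hda
      have hane : N 0 0 ≠ 0 := by
        intro h
        apply hden
        rw [hc0, hda, h]
        ring
      exact ⟨N 0 0, hane, rfl, hb0, hc0, hda⟩
  obtain ⟨μ, hμne, ha, hb, hc, hd⟩ := main
  constructor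
  · refine ⟨μ, hμne, ?_⟩
    funext i j
    fin_cases i <;> fin_cases j <;>
      simp [Matrix.one_apply, ha, hb, hc, hd]
  · intro z _
    rw [hb, hc, ha, hd]
    ring
end

section
/- Let a, b ∈ ℝ with 1 + a·b ≠ 0. Then, in 2×2 complex matrices, M(b) * M(0) * M(a) = (1 + a·b) • M((a + b)/(1 + a·b)) where a, b and (a+b)/(1+ab) are regarded as complex numbers. Hence the composition of the reversions of the unit circle through the real points a, 0, b (in this order) equals the reversion through the real point (a + b)/(1 + a·b), the relativistic sum of the velocities a and b. -/
open Matrix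

/-- Relativistic addition of velocities (paper's Section 5): for real `a, b` with
`1 + a*b ≠ 0`, the composition of the reversions of the unit circle through the
real points `a`, `0`, `b` (in this order) equals, up to the scalar `1 + a*b`,
the reversion through the relativistic sum `(a + b)/(1 + a*b)`. -/
theorem relativistic_velocity_addition (a b : ℝ) (h : 1 + a * b ≠ 0) :
    M (b : ℂ) * M (0 : ℂ) * M (a : ℂ)
      = ((1 + a * b : ℝ) : ℂ) • M (((a + b) / (1 + a * b) : ℝ) : ℂ) := by
  have h' : ((1 + a * b : ℝ) : ℂ) ≠ 0 := by exact_mod_cast Complex.ofReal_ne_zero.mpr h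
  have h'' : (1 : ℂ) + (a:ℂ) * b ≠ 0 := by push_cast at h'; exact h'
  simp only [M, Complex.conj_ofReal, map_zero]
  ext i j
  fin_cases i <;> fin_cases j <;>
    simp [Matrix.mul_apply, Fin.sum_univ_succ, Complex.ofReal_div] <;>
    (try rw [mul_div_cancel₀ _ h'']) <;> ring
end

section
/- Let p, q, r, s ∈ ℂ and suppose M(q) * M(p) = λ • (M(r) * M(s)) for some λ ∈ ℂ, λ ≠ 0. If 1 − q·conj(p) ≠ 0, then 1 − r·conj(s) ≠ 0 and (q − p)/(1 − q·conj(p)) = (r − s)/(1 − r·conj(s)). -/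
open Matrix

/-- If `M(q) * M(p)` and `M(r) * M(s)` agree up to a nonzero scalar (i.e. the pairs
`(p,q)` and `(r,s)` are conjugate with respect to the circle), and `1 - q * conj p ≠ 0`,
then `1 - r * conj s ≠ 0` and `(q - p)/(1 - q * conj p) = (r - s)/(1 - r * conj s)`. -/
theorem conjugate_pairs_formula (p q r s : ℂ) (lam : ℂ) (hlam : lam ≠ 0)
    (h : M q * M p = lam • (M r * M s))
    (hqp : 1 - q * (starRingEnd ℂ) p ≠ 0) :
    1 - r * (starRingEnd ℂ) s ≠ 0 ∧
    (q - p) / (1 - q * (starRingEnd ℂ) p) = (r - s) / (1 - r * (starRingEnd ℂ) s) := by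
  have h00 := congrFun (congrFun h 0) 0
  have h01 := congrFun (congrFun h 0) 1
  simp [M, Matrix.mul_apply, Fin.sum_univ_succ, Matrix.smul_apply] at h00 h01
  -- h00 : 1 - q * conj p = lam * (1 - r * conj s) (up to arrangement)
  have e00 : 1 - q * (starRingEnd ℂ) p = lam * (1 - r * (starRingEnd ℂ) s) := by
    linear_combination h00
  have e01 : q - p = lam * (r - s) := by linear_combination h01
  have hrs : 1 - r * (starRingEnd ℂ) s ≠ 0 := by
    intro h0
    apply hqp
    rw [e00, h0, mul_zero]
  refine ⟨hrs, ?_⟩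
  rw [e00, e01]
  field_simp
end

section
/- Let (x, y), (a, b) ∈ ℝ × ℝ with x² − y² = 1. Set d₁ = a·x − b·y − 1, d₂ = a·y − b·x, D = d₁² − d₂², and assume D ≠ 0. Define x' = ((x − a)·d₁ − (y − b)·d₂)/D and y' = ((y − b)·d₁ − (x − a)·d₂)/D. Then x'² − y'² = 1, and the three points (x, y), (a, b), (x', y') of ℝ² are collinear (Collinear ℝ ({(x,y), (a,b), (x',y')} : Set (ℝ × ℝ))). -/
/-- Paper's Proposition 6.1, branch `x² - y² = 1`, in real coordinates: the
split-complex reversion of the hyperbola through the point `(a, b)` preserves the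
hyperbola, and the image point is collinear with `(x, y)` and `(a, b)`. -/
theorem hyperbola_reversion_pos_branch (x y a b : ℝ)
    (hxy : x ^ 2 - y ^ 2 = 1)
    (d₁ d₂ D : ℝ)
    (hd₁ : d₁ = a * x - b * y - 1)
    (hd₂ : d₂ = a * y - b * x)
    (hD : D = d₁ ^ 2 - d₂ ^ 2)
    (hD0 : D ≠ 0)
    (x' y' : ℝ)
    (hx' : x' = ((x - a) * d₁ - (y - b) * d₂) / D)
    (hy' : y' = ((y - b) * d₁ - (x - a) * d₂) / D) :
    x' ^ 2 - y' ^ 2 = 1 ∧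
    Collinear ℝ ({(x, y), (a, b), (x', y')} : Set (ℝ × ℝ)) := by
  have hKey : (x - a) ^ 2 - (y - b) ^ 2 = D := by
    rw [hD, hd₁, hd₂]; linear_combination (1 + b ^ 2 - a ^ 2) * hxy
  have h1 : x' ^ 2 - y' ^ 2 = 1 := by
    rw [hx', hy']
    field_simp
    linear_combination (d₁ ^ 2 - d₂ ^ 2) * hKey - D * hD
  refine ⟨h1, ?_⟩
  set r : ℝ := (a ^ 2 - b ^ 2 - 1) / D with hr
  have hx'' : x' = a + r * (x - a) := by
    rw [hx', hr]
    field_simp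
    rw [hD, hd₁, hd₂]
    linear_combination (a + a * b ^ 2 - a ^ 3) * hxy
  have hy'' : y' = b + r * (y - b) := by
    rw [hy', hr]
    field_simp
    rw [hD, hd₁, hd₂]
    linear_combination (b + b ^ 3 - a ^ 2 * b) * hxy
  rw [collinear_iff_of_mem (Set.mem_insert_of_mem _ (Set.mem_insert _ _))]
  refine ⟨(x - a, y - b), ?_⟩
  rintro p (rfl | rfl | rfl)
  · exact ⟨1, by simp [Prod.ext_iff]⟩
  · exact ⟨0, by simp⟩
  · exact ⟨r, by simp [Prod.ext_iff, hx'', hy'']; constructor <;> ring⟩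
end

section
/- Let (x, y), (a, b) ∈ ℝ × ℝ with x² − y² = −1. Set d₁ = a·x − b·y + 1, d₂ = a·y − b·x, D = d₁² − d₂², and assume D ≠ 0. Define x' = ((a − x)·d₁ − (b − y)·d₂)/D and y' = ((b − y)·d₁ − (a − x)·d₂)/D. Then x'² − y'² = −1, and the three points (x, y), (a, b), (x', y') of ℝ² are collinear (Collinear ℝ ({(x,y), (a,b), (x',y')} : Set (ℝ × ℝ))). -/
/-- Paper's Proposition 6.1, branch `x² - y² = -1`, in real coordinates: the
split-complex reversion of this branch through the point `(a, b)` preserves the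
branch, and the image point is collinear with `(x, y)` and `(a, b)`. -/
theorem hyperbola_reversion_neg_branch (x y a b : ℝ)
    (hxy : x ^ 2 - y ^ 2 = -1)
    (d₁ d₂ D : ℝ)
    (hd₁ : d₁ = a * x - b * y + 1)
    (hd₂ : d₂ = a * y - b * x)
    (hD : D = d₁ ^ 2 - d₂ ^ 2)
    (hD0 : D ≠ 0)
    (x' y' : ℝ)
    (hx' : x' = ((a - x) * d₁ - (b - y) * d₂) / D)
    (hy' : y' = ((b - y) * d₁ - (a - x) * d₂) / D) :
    x' ^ 2 - y' ^ 2 = -1 ∧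
    Collinear ℝ ({(x, y), (a, b), (x', y')} : Set (ℝ × ℝ)) := by
  have key : (a - x) ^ 2 - (b - y) ^ 2 = -D := by
    rw [hD, hd₁, hd₂]; linear_combination (a ^ 2 - b ^ 2 + 1) * hxy
  have hx'' : x' * D = (a - x) * d₁ - (b - y) * d₂ := by
    rw [hx']; field_simp
  have hy'' : y' * D = (b - y) * d₁ - (a - x) * d₂ := by
    rw [hy']; field_simp
  have h1D : (x' ^ 2 - y' ^ 2) * D ^ 2 = -1 * D ^ 2 := by
    linear_combination (x' * D + ((a - x) * d₁ - (b - y) * d₂)) * hx''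
      - (y' * D + ((b - y) * d₁ - (a - x) * d₂)) * hy''
      + (d₁ ^ 2 - d₂ ^ 2) * key + D * hD
  have h1 : x' ^ 2 - y' ^ 2 = -1 :=
    mul_right_cancel₀ (pow_ne_zero 2 hD0) h1D
  refine ⟨h1, ?_⟩
  have detD : ((x' - x) * (b - y)) * D = ((y' - y) * (a - x)) * D := by
    linear_combination (b - y) * hx'' - (a - x) * hy'' + d₂ * key - D * hd₂
  have det : (x' - x) * (b - y) = (y' - y) * (a - x) :=
    mul_right_cancel₀ hD0 detD
  rw [collinear_iff_of_mem (Set.mem_insert (x, y) _)]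
  refine ⟨(a - x, b - y), ?_⟩
  rintro p (rfl | rfl | rfl)
  · exact ⟨0, by simp⟩
  · exact ⟨1, by simp [Prod.ext_iff]⟩
  · by_cases hax : a - x = 0
    · have hby : b - y ≠ 0 := by
        intro h
        apply hD0
        have := key
        rw [hax, h] at this
        simpa using this.symm
      have hxx : x' - x = 0 := by
        have h0 : (x' - x) * (b - y) = 0 := by rw [det, hax, mul_zero]
        rcases mul_eq_zero.1 h0 with h | h
        · exact h
        · exact absurd h hby
      refine ⟨(y' - y) / (b - y), ?_⟩
      simp only [Prod.ext_iff, Prod.smul_mk, Prod.mk_add_mk, smul_eq_mul, vadd_eq_add,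
        Prod.fst_add, Prod.snd_add, Prod.smul_fst, Prod.smul_snd]
      constructor
      · rw [hax]; simp; linarith
      · field_simp; ring
    · refine ⟨(x' - x) / (a - x), ?_⟩
      simp only [Prod.ext_iff, Prod.smul_mk, Prod.mk_add_mk, smul_eq_mul, vadd_eq_add,
        Prod.fst_add, Prod.snd_add, Prod.smul_fst, Prod.smul_snd]
      constructor
      · field_simp; ring
      · rw [div_mul_eq_mul_div, div_add' _ _ _ hax, eq_div_iff hax]
        linear_combination -det
end

section
/- For a point P = (A, B) ∈ ℝ², define the hyperbola reversion ρ_P(x, y) = (((x − A)·d₁ − (y − B)·d₂)/D, ((y − B)·d₁ − (x − A)·d₂)/D) where d₁ = A·x − B·y − 1, d₂ = A·y − B·x, D = d₁² − d₂². Let a, b ∈ ℝ with 1 − a·b ≠ 0, and set s = (a + b)/(1 − a·b). Then for every (x, y) ∈ ℝ² with x² − y² = 1, provided the quantity D is nonzero at each of the three successive applications and for the reversion through (0, s), one has ρ_{(0,b)}(ρ_{(0,0)}(ρ_{(0,a)}(x, y))) = ρ_{(0,s)}(x, y). That is, composing the hyperbola reversions through the collinear points (0,a), (0,0), (0,b)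 equals the reversion through (0, (a+b)/(1−ab)). -/
/-- The split-complex norm of the denominator appearing in the hyperbola reversion
through `P = (A, B)` evaluated at `Z = (x, y)`:
`D = d₁² - d₂²` with `d₁ = A*x - B*y - 1`, `d₂ = A*y - B*x`. -/
def revDen (P Z : ℝ × ℝ) : ℝ :=
  (P.1 * Z.1 - P.2 * Z.2 - 1) ^ 2 - (P.1 * Z.2 - P.2 * Z.1) ^ 2

/-- The reversion of the hyperbola `x² - y² = 1` through the point `P = (A, B)`,
in coordinates: `ρ_P(x, y) = (((x - A)d₁ - (y - B)d₂)/D, ((y - B)d₁ - (x - A)d₂)/D)`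
where `d₁ = A*x - B*y - 1`, `d₂ = A*y - B*x`, `D = d₁² - d₂²`. -/
noncomputable def rho (P Z : ℝ × ℝ) : ℝ × ℝ :=
  (((Z.1 - P.1) * (P.1 * Z.1 - P.2 * Z.2 - 1) - (Z.2 - P.2) * (P.1 * Z.2 - P.2 * Z.1)) /
      revDen P Z,
   ((Z.2 - P.2) * (P.1 * Z.1 - P.2 * Z.2 - 1) - (Z.1 - P.1) * (P.1 * Z.2 - P.2 * Z.1)) /
      revDen P Z)

lemma revDen_eval (c x y : ℝ) (h : x ^ 2 - y ^ 2 = 1) :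
    revDen (0, c) (x, y) = 1 - c ^ 2 + 2 * c * y := by
  simp only [revDen]
  nlinarith [h]

lemma rho_eval (c x y : ℝ) (h : x ^ 2 - y ^ 2 = 1) :
    rho (0, c) (x, y) =
      (-x * (1 + c ^ 2) / (1 - c ^ 2 + 2 * c * y),
       (2 * c + (c ^ 2 - 1) * y) / (1 - c ^ 2 + 2 * c * y)) := by
  simp only [rho, revDen_eval c x y h]
  simp only [Prod.mk.injEq]
  exact ⟨by ring_nf, by congr 1; linear_combination c * h⟩

lemma rho_zero (Z : ℝ × ℝ) : rho (0, 0) Z = (-Z.1, -Z.2) := by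
  simp [rho, revDen]

lemma hyp_image (c x y : ℝ) (h : x ^ 2 - y ^ 2 = 1)
    (hD : 1 - c ^ 2 + 2 * c * y ≠ 0) :
    (-x * (1 + c ^ 2) / (1 - c ^ 2 + 2 * c * y)) ^ 2 -
      ((2 * c + (c ^ 2 - 1) * y) / (1 - c ^ 2 + 2 * c * y)) ^ 2 = 1 := by
  field_simp
  rw [div_eq_one_iff_eq (pow_ne_zero 2 (by contrapose! hD; linarith))]
  linear_combination (1 + c ^ 2) ^ 2 * h

set_option maxHeartbeats 2000000 in
/-- Trigonometric tangent addition via hyperbola reversions (paper's Section 6):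
for real `a, b` with `1 - a*b ≠ 0` and `s = (a + b)/(1 - a*b)`, composing the
hyperbola reversions through the collinear points `(0, a)`, `(0, 0)`, `(0, b)`
equals the reversion through `(0, s)`, at every point of the hyperbola where all
the relevant denominators are nonzero. -/
theorem tangent_addition_porism (a b s : ℝ)
    (hab : 1 - a * b ≠ 0)
    (hs : s = (a + b) / (1 - a * b)) :
    ∀ x y : ℝ, x ^ 2 - y ^ 2 = 1 →
      revDen (0, a) (x, y) ≠ 0 →
      revDen (0, 0) (rho (0, a) (x, y)) ≠ 0 →
      revDen (0, b) (rho (0, 0) (rho (0, a) (x, y))) ≠ 0 →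
      revDen (0, s) (x, y) ≠ 0 →
      rho (0, b) (rho (0, 0) (rho (0, a) (x, y))) = rho (0, s) (x, y) := by
  intro x y h h1 _h2 h3 h4
  have hD1 : (1 - a ^ 2 + 2 * a * y) ≠ 0 := by rwa [revDen_eval a x y h] at h1
  have e1 : rho (0, a) (x, y) =
      (-x * (1 + a ^ 2) / (1 - a ^ 2 + 2 * a * y),
       (2 * a + (a ^ 2 - 1) * y) / (1 - a ^ 2 + 2 * a * y)) := rho_eval a x y h
  have hyp1 := hyp_image a x y h hD1
  have e2 : rho (0, 0) (rho (0, a) (x, y)) =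
      (-(-x * (1 + a ^ 2) / (1 - a ^ 2 + 2 * a * y)),
       -((2 * a + (a ^ 2 - 1) * y) / (1 - a ^ 2 + 2 * a * y))) := by rw [e1, rho_zero]
  have hyp2 : (-(-x * (1 + a ^ 2) / (1 - a ^ 2 + 2 * a * y))) ^ 2 -
      (-((2 * a + (a ^ 2 - 1) * y) / (1 - a ^ 2 + 2 * a * y))) ^ 2 = 1 := by
    rw [neg_pow, neg_pow]; simpa using hyp1
  have hD2 : 1 - b ^ 2 + 2 * b * (-((2 * a + (a ^ 2 - 1) * y) / (1 - a ^ 2 + 2 * a * y))) ≠ 0 := by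
    rw [e2, revDen_eval b _ _ hyp2] at h3; exact h3
  have hDs : (1 - s ^ 2 + 2 * s * y) ≠ 0 := by rwa [revDen_eval s x y h] at h4
  have eq1 : 1 - b ^ 2 + 2 * b * (-((2 * a + (a ^ 2 - 1) * y) / (1 - a ^ 2 + 2 * a * y))) =
      ((1 - b ^ 2) * (1 - a ^ 2 + 2 * a * y) - 2 * b * (2 * a + (a ^ 2 - 1) * y)) /
        (1 - a ^ 2 + 2 * a * y) := by
    field_simp
    ring
  have hN : (1 - b ^ 2) * (1 - a ^ 2 + 2 * a * y) - 2 * b * (2 * a + (a ^ 2 - 1) * y) ≠ 0 := by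
    rw [eq1] at hD2
    intro hz
    exact hD2 (by rw [hz]; simp)
  rw [e2, rho_eval b _ _ hyp2, rho_eval s x y h]
  have hDs' : 1 - ((a + b) / (1 - a * b)) ^ 2 + 2 * ((a + b) / (1 - a * b)) * y ≠ 0 := by
    rw [← hs]; exact hDs
  rw [eq1, hs]
  simp only [Prod.mk.injEq]
  constructor
  · rw [div_div_eq_mul_div, div_eq_div_iff hN hDs']
    have hD1' : 1 - a ^ 2 + a * 2 * y ≠ 0 := by contrapose! hD1; linarith
    field_simp
    ring
  · rw [div_div_eq_mul_div, div_eq_div_iff hN hDs']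
    have hD1' : 1 - a ^ 2 + a * 2 * y ≠ 0 := by contrapose! hD1; linarith
    have hab' : 1 - b * a ≠ 0 := by rwa [mul_comm] at hab
    field_simp
    ring
end

section
/- Let (x, y), (a, b) ∈ ℝ × ℝ with x² = 1. Set d₁ = a·x − 1, d₂ = a·y − b·x, and assume d₁ ≠ 0. Define x' = (x − a)/d₁ and y' = ((y − b)·d₁ − (x − a)·d₂)/d₁². Then x'² = 1, and the three points (x, y), (a, b), (x', y') of ℝ² are collinear (Collinear ℝ ({(x,y), (a,b), (x',y')} : Set (ℝ × ℝ))). -/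
/-- Reversion of the degenerate quadric `x² = 1` (a pair of parallel lines, the
"unit sphere" of the dual numbers) through the point `(a, b)`, in coordinates:
it preserves the pair of lines `x² = 1` and the image point is collinear with
`(x, y)` and `(a, b)`. -/
theorem parallel_lines_reversion (x y a b : ℝ)
    (hx2 : x ^ 2 = 1)
    (d₁ d₂ : ℝ)
    (hd₁ : d₁ = a * x - 1)
    (hd₂ : d₂ = a * y - b * x)
    (hd₁0 : d₁ ≠ 0)
    (x' y' : ℝ)
    (hx' : x' = (x - a) / d₁)
    (hy' : y' = ((y - b) * d₁ - (x - a) * d₂) / d₁ ^ 2) :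
    x' ^ 2 = 1 ∧
    Collinear ℝ ({(x, y), (a, b), (x', y')} : Set (ℝ × ℝ)) := by
  constructor
  · rw [hx', div_pow, div_eq_one_iff_eq (pow_ne_zero 2 hd₁0), hd₁]
    linear_combination (1 - a ^ 2) * hx2
  · rw [collinear_iff_exists_forall_eq_smul_vadd]
    refine ⟨(x, y), (a - x, b - y), ?_⟩
    intro p hp
    simp only [Set.mem_insert_iff, Set.mem_singleton_iff] at hp
    rcases hp with rfl | rfl | rfl
    · exact ⟨0, by simp⟩
    · exact ⟨1, by simp [Prod.ext_iff]⟩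
    · refine ⟨-2 / d₁, ?_⟩
      have h2 : d₁ ^ 2 ≠ 0 := pow_ne_zero 2 hd₁0
      simp only [Prod.ext_iff, Prod.smul_mk, smul_eq_mul, Prod.mk_add_mk,
        vadd_eq_add]
      constructor
      · rw [hx']
        field_simp
        rw [hd₁]
        linear_combination (-a) * hx2
      · rw [hy']
        field_simp
        rw [hd₁, hd₂]
        linear_combination (b - a^2*y) * hx2
end
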